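/- (Performance bound implies information bound) In addition to the stated filtering assumptions, let B ∈ ℝ^{n×m}, let Q ∈ ℝ^{n×n} and R ∈ ℝ^{m×m} be symmetric positive definite, let K ∈ ℝ^{n×n} be symmetric positive semidefinite with K ⪰ Q, let x̄, g ∈ ℝⁿ, H ∈ ℝ^{m×n}, and let W̄ ∈ ℝ^{n×n} be symmetric positive semidefinite. Define the total cost J := tr(KΣ + (Q − K)Σ̄) + x̄ᵀQx̄ − gᵀB(R + BᵀKB)⁻¹Bᵀg + tr(Q W̄) + tr(Hᵀ R H W̄), where Σ̄ := (Cᵀ V⁻¹ C + Σ⁻¹)⁻¹. If J ≤ α for a real number α, then tr(Σ) ≤ (1/λ_min(Q))·( α − x̄ᵀQx̄ + gᵀB(R + BᵀKB)⁻¹Bᵀg − tr(Q W̄) − tr(Hᵀ R H W̄) ). -/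

import Mathlib

open Matrix


open scoped MatrixOrder in
lemma trace_mul_nonneg' {n : ℕ} {P X : Matrix (Fin n) (Fin n) ℝ}
    (hP : P.PosSemidef) (hX : X.PosSemidef) : 0 ≤ (P * X).trace := by
  have hs : (CFC.sqrt X).PosSemidef := (CFC.sqrt_nonneg X).posSemidef
  have key : (P * X).trace = (CFC.sqrt X * P * CFC.sqrt X).trace := by
    conv_lhs => rw [← CFC.sqrt_mul_sqrt_self X hX.nonneg]
    rw [← mul_assoc, Matrix.trace_mul_cycle]
  have hpsd : (CFC.sqrt X * P * CFC.sqrt X).PosSemidef := by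
    have := hP.mul_mul_conjTranspose_same (CFC.sqrt X)
    rwa [hs.isHermitian.eq] at this
  rw [key, Matrix.trace]
  apply Finset.sum_nonneg
  intro i _
  have := hpsd.diag_nonneg (i := i)
  simpa [Matrix.mulVec_single, dotProduct, Pi.single_apply] using this

lemma sub_inf_smul_one_posSemidef {n : ℕ} (hn : 1 ≤ n)
    {Q : Matrix (Fin n) (Fin n) ℝ} (hQ : Q.PosDef) :
    (Q - (⨅ j, hQ.1.eigenvalues j) • (1 : Matrix (Fin n) (Fin n) ℝ)).PosSemidef := by
  haveI : Nonempty (Fin n) := ⟨⟨0, hn⟩⟩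
  set μ := ⨅ j, hQ.1.eigenvalues j with hμ
  have hbdd : BddBelow (Set.range hQ.1.eigenvalues) := (Set.finite_range _).bddBelow
  have hle : ∀ j, μ ≤ hQ.1.eigenvalues j := fun j => ciInf_le hbdd j
  have hdiag : (Matrix.diagonal (fun j => hQ.1.eigenvalues j - μ)).PosSemidef :=
    posSemidef_diagonal_iff.mpr fun i => sub_nonneg.mpr (hle i)
  have key := hdiag.mul_mul_conjTranspose_same (hQ.1.eigenvectorUnitary : Matrix (Fin n) (Fin n) ℝ)
  have hU : (hQ.1.eigenvectorUnitary : Matrix (Fin n) (Fin n) ℝ) *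
      star (hQ.1.eigenvectorUnitary : Matrix (Fin n) (Fin n) ℝ) = 1 :=
    (Matrix.mem_unitaryGroup_iff).mp hQ.1.eigenvectorUnitary.2
  have hdec := hQ.1.spectral_theorem
  have heq : Q - μ • (1 : Matrix (Fin n) (Fin n) ℝ) =
      (hQ.1.eigenvectorUnitary : Matrix (Fin n) (Fin n) ℝ) *
        Matrix.diagonal (fun j => hQ.1.eigenvalues j - μ) *
        star (hQ.1.eigenvectorUnitary : Matrix (Fin n) (Fin n) ℝ) := by
    have h1 : Matrix.diagonal (fun j => hQ.1.eigenvalues j - μ) =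
        Matrix.diagonal (RCLike.ofReal ∘ hQ.1.eigenvalues) - μ • 1 := by
      rw [smul_one_eq_diagonal, ← diagonal_sub]
      rfl
    rw [h1, mul_sub, sub_mul]
    conv_lhs => rw [hdec, Unitary.conjStarAlgAut_apply]
    congr 1
    rw [Matrix.mul_smul, Matrix.smul_mul, mul_one, hU]
  rw [heq]
  exact key

lemma sub_post_cov_posSemidef {n : ℕ} {D S : Matrix (Fin n) (Fin n) ℝ}
    (hD : D.PosSemidef) (hS : S.PosDef) : (S - (D + S⁻¹)⁻¹).PosSemidef := by
  set T := D + S⁻¹ with hT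
  have hTpd : T.PosDef := by rw [hT, add_comm]; exact hS.inv.add_posSemidef hD
  have hTdet : IsUnit T.det := isUnit_iff_ne_zero.mpr hTpd.det_pos.ne'
  have hSdet : IsUnit S.det := isUnit_iff_ne_zero.mpr hS.det_pos.ne'
  have e1 : T⁻¹ * T = 1 := nonsing_inv_mul T hTdet
  have e2 : T * T⁻¹ = 1 := mul_nonsing_inv T hTdet
  have e3 : S⁻¹ * S = 1 := nonsing_inv_mul S hSdet
  have e4 : S * S⁻¹ = 1 := mul_nonsing_inv S hSdet
  have hDh : Dᴴ = D := hD.1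
  have hTinvH : (T⁻¹)ᴴ = T⁻¹ := hTpd.inv.1
  have mid : D + D * S * Dᴴ = T * S * T - T := by
    rw [hDh, hT, add_mul, e3, add_mul, one_mul, mul_add, mul_assoc D S S⁻¹, e4, mul_one]
    abel
  have key : S - T⁻¹ = T⁻¹ * (D + D * S * Dᴴ) * (T⁻¹)ᴴ := by
    rw [hTinvH, mid, mul_sub, sub_mul]
    simp only [← mul_assoc]
    rw [e1, one_mul, mul_assoc S T T⁻¹, e2, mul_one, one_mul]
  rw [key]
  exact (hD.add (hS.posSemidef.mul_mul_conjTranspose_same D)).mul_mul_conjTranspose_same T⁻¹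

/-- Performance bound implies information bound: if the total private-LQG
cost `J` is at most `α`, then
`tr Σ ≤ (1/λ_min(Q))·(α − x̄ᵀQx̄ + gᵀB(R+BᵀKB)⁻¹Bᵀg − tr(QW̄) − tr(HᵀRHW̄))`. -/
theorem cost_bound_implies_trace_bound {n m : ℕ} (hn : 1 ≤ n)
    (A W S : Matrix (Fin n) (Fin n) ℝ)
    (c σ : Fin n → ℝ) (hc : ∀ i, 0 < c i) (hσ : ∀ i, 0 < σ i)
    (hW : W.PosDef) (hS : S.PosDef)
    (hric : S = A * S * Aᵀ -
        A * S * (Matrix.diagonal c)ᵀ *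
          (Matrix.diagonal c * S * (Matrix.diagonal c)ᵀ +
            Matrix.diagonal fun i => σ i ^ 2)⁻¹ *
          Matrix.diagonal c * S * Aᵀ + W)
    (B : Matrix (Fin n) (Fin m) ℝ) (Q : Matrix (Fin n) (Fin n) ℝ)
    (R : Matrix (Fin m) (Fin m) ℝ) (hQ : Q.PosDef) (hR : R.PosDef)
    (K : Matrix (Fin n) (Fin n) ℝ) (hK : K.PosSemidef) (hKQ : (K - Q).PosSemidef)
    (xb g : Fin n → ℝ) (H : Matrix (Fin m) (Fin n) ℝ)
    (Wb : Matrix (Fin n) (Fin n) ℝ) (hWb : Wb.PosSemidef) (α : ℝ)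
    (hJ : (K * S + (Q - K) *
          (((Matrix.diagonal c)ᵀ * (Matrix.diagonal fun i => σ i ^ 2)⁻¹ *
            Matrix.diagonal c + S⁻¹)⁻¹)).trace +
        xb ⬝ᵥ (Q *ᵥ xb) - g ⬝ᵥ ((B * (R + Bᵀ * K * B)⁻¹ * Bᵀ) *ᵥ g) +
        (Q * Wb).trace + (Hᵀ * R * H * Wb).trace ≤ α) :
    S.trace ≤ (1 / ⨅ j, hQ.1.eigenvalues j) *
      (α - xb ⬝ᵥ (Q *ᵥ xb) + g ⬝ᵥ ((B * (R + Bᵀ * K * B)⁻¹ * Bᵀ) *ᵥ g) -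
        (Q * Wb).trace - (Hᵀ * R * H * Wb).trace) := by
  haveI : Nonempty (Fin n) := ⟨⟨0, hn⟩⟩
  set μ := ⨅ j, hQ.1.eigenvalues j with hμdef
  -- positivity of μ
  obtain ⟨j₀, hj₀⟩ := Finite.exists_min hQ.1.eigenvalues
  have hμpos : 0 < μ := lt_of_lt_of_le (hQ.eigenvalues_pos j₀) (le_ciInf hj₀)
  -- D is positive semidefinite
  set D := (Matrix.diagonal c)ᵀ * (Matrix.diagonal fun i => σ i ^ 2)⁻¹ * Matrix.diagonal c with hDdef
  have hV : (Matrix.diagonal fun i => σ i ^ 2).PosDef :=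
    posDef_diagonal_iff.mpr fun i => pow_pos (hσ i) 2
  have hD : D.PosSemidef := by
    have h := hV.inv.posSemidef.conjTranspose_mul_mul_same (Matrix.diagonal c)
    have hct : (Matrix.diagonal c)ᴴ = (Matrix.diagonal c)ᵀ := rfl
    rwa [hct] at h
  set T := D + S⁻¹ with hTdef
  have ht1 : 0 ≤ ((K - Q) * (S - T⁻¹)).trace :=
    trace_mul_nonneg' hKQ (sub_post_cov_posSemidef hD hS)
  have ht2 : 0 ≤ ((Q - μ • (1 : Matrix (Fin n) (Fin n) ℝ)) * S).trace :=
    trace_mul_nonneg' (sub_inf_smul_one_posSemidef hn hQ) hS.posSemidef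
  have hid : (K * S + (Q - K) * T⁻¹).trace =
      ((K - Q) * (S - T⁻¹)).trace + ((Q - μ • (1 : Matrix (Fin n) (Fin n) ℝ)) * S).trace +
        μ * S.trace := by
    simp only [Matrix.sub_mul, Matrix.mul_sub, Matrix.trace_add, Matrix.trace_sub,
      Matrix.smul_mul, Matrix.trace_smul, one_mul, smul_eq_mul]
    ring
  have hmain : μ * S.trace ≤
      α - xb ⬝ᵥ (Q *ᵥ xb) + g ⬝ᵥ ((B * (R + Bᵀ * K * B)⁻¹ * Bᵀ) *ᵥ g) -
        (Q * Wb).trace - (Hᵀ * R * H * Wb).trace := by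
    have hJ' : (K * S + (Q - K) * T⁻¹).trace ≤
        α - xb ⬝ᵥ (Q *ᵥ xb) + g ⬝ᵥ ((B * (R + Bᵀ * K * B)⁻¹ * Bᵀ) *ᵥ g) -
          (Q * Wb).trace - (Hᵀ * R * H * Wb).trace := by linarith
    linarith [hid ▸ hJ']
  have hrw : S.trace = (1 / μ) * (μ * S.trace) := by field_simp
  rw [hrw]
  exact mul_le_mul_of_nonneg_left hmain (by positivity)
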